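/- Schur complement restriction property: for a positive semidefinite operator matrix M indexed by \{0,\dots,n-1\} and nested index sets I \subseteq J \subseteq \{0,\dots,n-1\}, the Schur complement of M supported on I equals the Schur complement supported on I of the Schur complement of M supported on J: S(M; I) = S(S(M; J); I). -/

import Mathlib

open scoped ComplexOrder
open ContinuousLinearMap

/-- The orthogonal projection of the Hilbert direct sum `⊕ᵢ H i` onto the coordinates in
the index set `Λ`. -/
noncomputable def coordProj {n : ℕ} {H : Fin n → Type*}
    [∀ i, NormedAddCommGroup (H i)] [∀ i, InnerProductSpace ℂ (H i)]
    (Λ : Finset (Fin n)) : PiLp 2 H →L[ℂ] PiLp 2 H :=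
  (PiLp.continuousLinearEquiv 2 ℂ H).symm.toContinuousLinearMap ∘L
    (ContinuousLinearMap.pi fun i =>
      if i ∈ Λ then ContinuousLinearMap.proj i else 0) ∘L
    (PiLp.continuousLinearEquiv 2 ℂ H).toContinuousLinearMap

/-- `S` is the Schur complement of `M` supported on the range of the orthogonal projection
`P`: `S` is positive, supported on `ran P`, `M - S ≥ 0`, and `S` is the largest such. -/
def IsSchurCompl {K : Type*} [NormedAddCommGroup K] [InnerProductSpace ℂ K]
    (M P S : K →L[ℂ] K) : Prop :=
  (∀ x, 0 ≤ (inner ℂ (S x) x : ℂ)) ∧ P ∘L S ∘L P = S ∧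
  (∀ x, 0 ≤ (inner ℂ ((M - S) x) x : ℂ)) ∧
  ∀ S' : K →L[ℂ] K, (∀ x, 0 ≤ (inner ℂ (S' x) x : ℂ)) → P ∘L S' ∘L P = S' →
    (∀ x, 0 ≤ (inner ℂ ((M - S') x) x : ℂ)) →
    ∀ x, (inner ℂ (S' x) x : ℂ).re ≤ (inner ℂ (S x) x : ℂ).re

lemma coordProj_apply {n : ℕ} {H : Fin n → Type*}
    [∀ i, NormedAddCommGroup (H i)] [∀ i, InnerProductSpace ℂ (H i)]
    (Λ : Finset (Fin n)) (x : PiLp 2 H) (i : Fin n) :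
    coordProj Λ x i = if i ∈ Λ then x i else 0 := by
  simp only [coordProj, ContinuousLinearMap.comp_apply,
    ContinuousLinearEquiv.coe_coe, ContinuousLinearMap.pi_apply]
  by_cases h : i ∈ Λ <;> simp [h, WithLp.linearEquiv]

lemma coordProj_comp_left {n : ℕ} {H : Fin n → Type*}
    [∀ i, NormedAddCommGroup (H i)] [∀ i, InnerProductSpace ℂ (H i)]
    {I J : Finset (Fin n)} (hIJ : I ⊆ J) :
    coordProj J ∘L coordProj I = (coordProj I : PiLp 2 H →L[ℂ] PiLp 2 H) := by
  ext x : 1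
  ext i
  simp only [ContinuousLinearMap.comp_apply, coordProj_apply]
  by_cases h : i ∈ I
  · simp [h, hIJ h]
  · by_cases h' : i ∈ J <;> simp [h, h']

lemma coordProj_comp_right {n : ℕ} {H : Fin n → Type*}
    [∀ i, NormedAddCommGroup (H i)] [∀ i, InnerProductSpace ℂ (H i)]
    {I J : Finset (Fin n)} (hIJ : I ⊆ J) :
    coordProj I ∘L coordProj J = (coordProj I : PiLp 2 H →L[ℂ] PiLp 2 H) := by
  ext x : 1
  ext i
  simp only [ContinuousLinearMap.comp_apply, coordProj_apply]
  by_cases h : i ∈ I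
  · simp [h, hIJ h]
  · simp [h]

/-- Schur complement restriction property: for a positive semidefinite block operator matrix
`M` indexed by `{0, …, n-1}` and nested index sets `I ⊆ J`, the Schur complement of `M`
supported on `I` equals the Schur complement, supported on `I`, of the Schur complement of
`M` supported on `J`:  `S(M; I) = S(S(M; J); I)`. -/
theorem stmt_15 {n : ℕ} {H : Fin n → Type*}
    [∀ i, NormedAddCommGroup (H i)] [∀ i, InnerProductSpace ℂ (H i)]
    [∀ i, CompleteSpace (H i)]
    (M : PiLp 2 H →L[ℂ] PiLp 2 H) (hM : ∀ x, 0 ≤ (inner ℂ (M x) x : ℂ))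
    (I J : Finset (Fin n)) (hIJ : I ⊆ J)
    (SJ : PiLp 2 H →L[ℂ] PiLp 2 H) (hSJ : IsSchurCompl M (coordProj J) SJ)
    (SI : PiLp 2 H →L[ℂ] PiLp 2 H) (hSI : IsSchurCompl M (coordProj I) SI) :
    IsSchurCompl SJ (coordProj I) SI := by
  obtain ⟨hSJpos, hSJsupp, hMSJ, hSJmax⟩ := hSJ
  obtain ⟨hSIpos, hSIsupp, hMSI, hSImax⟩ := hSI
  -- SI is supported on J as well
  have hSIsuppJ : coordProj J ∘L SI ∘L coordProj J = SI := by
    conv_lhs => rw [← hSIsupp]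
    simp only [← ContinuousLinearMap.comp_assoc]
    rw [coordProj_comp_left hIJ]
    simp only [ContinuousLinearMap.comp_assoc]
    rw [coordProj_comp_right hIJ]
    exact hSIsupp
  -- SI is dominated by SJ (by maximality of SJ)
  have hle : ∀ x, (inner ℂ (SI x) x : ℂ).re ≤ (inner ℂ (SJ x) x : ℂ).re :=
    hSJmax SI hSIpos hSIsuppJ hMSI
  refine ⟨hSIpos, hSIsupp, ?_, ?_⟩
  · intro x
    have h1 := hSJpos x
    have h2 := hSIpos x
    rw [Complex.nonneg_iff] at h1 h2 ⊢
    simp only [ContinuousLinearMap.sub_apply, inner_sub_left, Complex.sub_re,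
      Complex.sub_im]
    exact ⟨by linarith [hle x], by linarith [h1.2, h2.2]⟩
  · intro S' hS'pos hS'supp hSJS'
    have hMS' : ∀ x, 0 ≤ (inner ℂ ((M - S') x) x : ℂ) := by
      intro x
      have h1 := hMSJ x
      have h2 := hSJS' x
      rw [Complex.nonneg_iff] at h1 h2 ⊢
      simp only [ContinuousLinearMap.sub_apply, inner_sub_left, Complex.sub_re,
        Complex.sub_im] at h1 h2 ⊢
      constructor <;> linarith [h1.1, h1.2, h2.1, h2.2]
    exact hSImax S' hS'pos hS'supp hMS'
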